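/- Fix b ∈ [p,q] and define B(λ) = ∫_0^1 A'(t(λ−b)+b) dt. Then B(λ) = (A(λ)−A(b))/(λ−b) for all λ ∈ [p,q] with λ ≠ b, B is of class C^{N−1} on [p,q], and (−1)^{1+m} B^{(m)}(λ) < 0 for all λ ∈ [p,q] and all 0 ≤ m ≤ N−1. -/

import Mathlib

open Set MeasureTheory

private lemma iterDW_of_isOpen {f : ℝ → ℝ} {s : Set ℝ} {x : ℝ} (n : ℕ)
    (hs : IsOpen s) (hx : x ∈ s) :
    iteratedDerivWithin n f s x = iteratedDeriv n f x := by
  simp only [iteratedDerivWithin, iteratedDeriv, iteratedFDerivWithin_of_isOpen n hs hx]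

/-- base case of the induction in Lemma 4.3.  If `A` is `C^N` on an
open interval containing `[p,q]` with `(−1)^{k−1} A^{(k)} > 0` on `[p,q]` for
`1 ≤ k ≤ N`, and `b ∈ [p,q]`, then `B(λ) = ∫_0^1 A'(t(λ−b)+b) dt` equals the divided
difference `(A(λ)−A(b))/(λ−b)` for `λ ≠ b`, is `C^{N−1}` on `[p,q]`, and satisfies
`(−1)^{1+m} B^{(m)}(λ) < 0` on `[p,q]` for `0 ≤ m ≤ N−1`. -/
theorem stmt_5 (N : ℕ) (hN : 1 ≤ N) (p q : ℝ) (hpq : p < q)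
    (A : ℝ → ℝ) (u v : ℝ) (hu : u < p) (hv : q < v)
    (hA : ContDiffOn ℝ (↑N) A (Set.Ioo u v))
    (hAd : ∀ k, 1 ≤ k → k ≤ N → ∀ x ∈ Set.Icc p q,
      0 < (-1 : ℝ) ^ (k - 1) * iteratedDeriv k A x)
    (b : ℝ) (hb : b ∈ Set.Icc p q) :
    (∀ x ∈ Set.Icc p q, x ≠ b →
      (∫ t in (0:ℝ)..1, deriv A (t * (x - b) + b)) = (A x - A b) / (x - b)) ∧
    ContDiffOn ℝ (↑(N - 1)) (fun x => ∫ t in (0:ℝ)..1, deriv A (t * (x - b) + b))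
      (Set.Icc p q) ∧
    ∀ m, m ≤ N - 1 → ∀ x ∈ Set.Icc p q,
      (-1 : ℝ) ^ (1 + m) *
        iteratedDerivWithin m (fun y => ∫ t in (0:ℝ)..1, deriv A (t * (y - b) + b))
          (Set.Icc p q) x < 0 := by
  have hs_open : IsOpen (Set.Ioo u v) := isOpen_Ioo
  have hKs : Set.Icc p q ⊆ Set.Ioo u v := fun x hx =>
    ⟨lt_of_lt_of_le hu hx.1, lt_of_le_of_lt hx.2 hv⟩
  have hbs : b ∈ Set.Ioo u v := hKs hb
  have hmem : ∀ {x : ℝ}, x ∈ Set.Ioo u v → ∀ {t : ℝ}, t ∈ Set.Icc (0:ℝ) 1 →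
      t * (x - b) + b ∈ Set.Ioo u v := by
    intro x hx t ht
    have h := (convex_Ioo u v).add_smul_sub_mem hbs hx ht
    rw [smul_eq_mul] at h
    rwa [add_comm] at h
  have hmemK : ∀ {x : ℝ}, x ∈ Set.Icc p q → ∀ {t : ℝ}, t ∈ Set.Icc (0:ℝ) 1 →
      t * (x - b) + b ∈ Set.Icc p q := by
    intro x hx t ht
    have h := (convex_Icc p q).add_smul_sub_mem hb hx ht
    rw [smul_eq_mul] at h
    rwa [add_comm] at h
  have hUs : UniqueDiffOn ℝ (Set.Ioo u v) := hs_open.uniqueDiffOn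
  -- continuity of iterated derivatives of A
  have hcontD : ∀ k : ℕ, k ≤ N → ContinuousOn (iteratedDeriv k A) (Set.Ioo u v) := by
    intro k hk
    have h := hA.continuousOn_iteratedDerivWithin (by exact_mod_cast hk) hUs
    exact h.congr fun x hx => (iterDW_of_isOpen k hs_open hx).symm
  -- differentiability of iterated derivatives of A
  have hdiffD : ∀ k : ℕ, k + 1 ≤ N → ∀ x ∈ Set.Ioo u v,
      HasDerivAt (iteratedDeriv k A) (iteratedDeriv (k+1) A x) x := by
    intro k hk x hx
    have hd : DifferentiableOn ℝ (iteratedDerivWithin k A (Set.Ioo u v)) (Set.Ioo u v) :=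
      hA.differentiableOn_iteratedDerivWithin (by exact_mod_cast Nat.lt_of_succ_le hk) hUs
    have heq : iteratedDerivWithin k A (Set.Ioo u v) =ᶠ[nhds x] iteratedDeriv k A :=
      Filter.eventuallyEq_of_mem (hs_open.mem_nhds hx)
        (fun y hy => iterDW_of_isOpen k hs_open hy)
    have hd2 : DifferentiableAt ℝ (iteratedDeriv k A) x :=
      (((hd x hx).differentiableAt (hs_open.mem_nhds hx)).congr_of_eventuallyEq heq.symm)
    have := hd2.hasDerivAt
    rwa [iteratedDeriv_succ]
  -- the families of integrals
  set f : ℕ → ℝ → ℝ :=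
    fun m x => ∫ t in (0:ℝ)..1, t ^ m * iteratedDeriv (m+1) A (t * (x - b) + b) with hf_def
  -- continuity of integrand in t
  have hIcont : ∀ (m : ℕ), m + 1 ≤ N → ∀ x ∈ Set.Ioo u v,
      ContinuousOn (fun t : ℝ => t ^ m * iteratedDeriv (m+1) A (t * (x - b) + b))
        (Set.Icc 0 1) := by
    intro m hm x hx
    apply ContinuousOn.mul (by fun_prop)
    exact (hcontD (m+1) hm).comp (by fun_prop) (fun t ht => hmem hx ht)
  have hIint : ∀ (m : ℕ), m + 1 ≤ N → ∀ x ∈ Set.Ioo u v,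
      IntervalIntegrable (fun t : ℝ => t ^ m * iteratedDeriv (m+1) A (t * (x - b) + b))
        volume 0 1 := by
    intro m hm x hx
    apply ContinuousOn.intervalIntegrable
    rw [Set.uIcc_of_le (by norm_num : (0:ℝ) ≤ 1)]
    exact hIcont m hm x hx
  -- neighborhood/compact containment machinery around a point of the open interval
  have hnbhd : ∀ x₀ ∈ Set.Ioo u v, ∃ ε > 0,
      (Metric.ball x₀ ε ⊆ Set.Icc (min (x₀ - ε) p) (max (x₀ + ε) q)) ∧
      (Set.Icc (min (x₀ - ε) p) (max (x₀ + ε) q) ⊆ Set.Ioo u v) ∧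
      Convex ℝ (Set.Icc (min (x₀ - ε) p) (max (x₀ + ε) q)) ∧
      b ∈ Set.Icc (min (x₀ - ε) p) (max (x₀ + ε) q) := by
    intro x₀ hx₀
    obtain ⟨hx₀u, hx₀v⟩ := hx₀
    refine ⟨min (x₀ - u) (v - x₀) / 2,
      div_pos (lt_min (sub_pos.2 hx₀u) (sub_pos.2 hx₀v)) two_pos, ?_, ?_, convex_Icc _ _, ?_⟩
    · intro y hy
      rw [Metric.mem_ball, Real.dist_eq, abs_sub_lt_iff] at hy
      constructor
      · exact le_trans (min_le_left _ _) (by linarith [hy.2])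
      · exact le_trans (by linarith [hy.1]) (le_max_left _ _)
    · intro y hy
      have h1 : u < min (x₀ - min (x₀ - u) (v - x₀) / 2) p := by
        apply lt_min _ hu
        have : min (x₀ - u) (v - x₀) ≤ x₀ - u := min_le_left _ _
        linarith [lt_min (sub_pos.2 hx₀u) (sub_pos.2 hx₀v)]
      have h2 : max (x₀ + min (x₀ - u) (v - x₀) / 2) q < v := by
        apply max_lt _ hv
        have : min (x₀ - u) (v - x₀) ≤ v - x₀ := min_le_right _ _
        linarith [lt_min (sub_pos.2 hx₀u) (sub_pos.2 hx₀v)]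
      exact ⟨lt_of_lt_of_le h1 hy.1, lt_of_le_of_lt hy.2 h2⟩
    · exact ⟨le_trans (min_le_right _ _) hb.1, le_trans hb.2 (le_max_right _ _)⟩
  -- key derivative computation
  have hderiv : ∀ (m : ℕ), m + 2 ≤ N → ∀ x₀ ∈ Set.Ioo u v,
      HasDerivAt (f m) (f (m+1) x₀) x₀ := by
    intro m hm x₀ hx₀
    obtain ⟨ε, hε, hball, hJs, hJconv, hbJ⟩ := hnbhd x₀ hx₀
    set J := Set.Icc (min (x₀ - ε) p) (max (x₀ + ε) q) with hJ_def
    obtain ⟨M, hM⟩ := isCompact_Icc.exists_bound_of_continuousOn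
      ((hcontD (m+2) hm).mono hJs)
    have hcJ : ∀ {x : ℝ}, x ∈ Metric.ball x₀ ε → ∀ {t : ℝ}, t ∈ Set.Icc (0:ℝ) 1 →
        t * (x - b) + b ∈ J := by
      intro x hx t ht
      have h := hJconv.add_smul_sub_mem hbJ (hball hx) ht
      rw [smul_eq_mul] at h; rwa [add_comm] at h
    have hballs : Metric.ball x₀ ε ⊆ Set.Ioo u v := hball.trans hJs
    have key := intervalIntegral.hasDerivAt_integral_of_dominated_loc_of_deriv_le
      (F := fun x t => t ^ m * iteratedDeriv (m+1) A (t * (x - b) + b))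
      (F' := fun x t => t ^ (m+1) * iteratedDeriv (m+2) A (t * (x - b) + b))
      (μ := volume) (a := (0:ℝ)) (b := (1:ℝ)) (bound := fun _ => M) (x₀ := x₀) (Metric.ball_mem_nhds x₀ hε)
      ?_ ?_ ?_ ?_ ?_ ?_
    · exact key.2
    · filter_upwards [Metric.ball_mem_nhds x₀ hε] with x hx
      rw [Set.uIoc_of_le (by norm_num : (0:ℝ) ≤ 1)]
      exact ((hIcont m (by omega) x (hballs hx)).mono Set.Ioc_subset_Icc_self).aestronglyMeasurable
        measurableSet_Ioc
    · exact hIint m (by omega) x₀ hx₀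
    · rw [Set.uIoc_of_le (by norm_num : (0:ℝ) ≤ 1)]
      exact ((hIcont (m+1) hm x₀ hx₀).mono Set.Ioc_subset_Icc_self).aestronglyMeasurable
        measurableSet_Ioc
    · apply Filter.Eventually.of_forall
      intro t ht x hx
      rw [Set.uIoc_of_le (by norm_num : (0:ℝ) ≤ 1)] at ht
      have ht' : t ∈ Set.Icc (0:ℝ) 1 := ⟨ht.1.le, ht.2⟩
      have hc : t * (x - b) + b ∈ J := hcJ hx ht'
      have habs : |t ^ (m+1)| ≤ 1 := by
        rw [abs_pow]
        exact pow_le_one₀ (abs_nonneg t) (abs_le.2 ⟨by linarith [ht.1], ht.2⟩)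
      calc ‖t ^ (m+1) * iteratedDeriv (m+2) A (t * (x - b) + b)‖
          = |t ^ (m+1)| * ‖iteratedDeriv (m+2) A (t * (x - b) + b)‖ := by
            rw [Real.norm_eq_abs, Real.norm_eq_abs, abs_mul]
        _ ≤ 1 * ‖iteratedDeriv (m+2) A (t * (x - b) + b)‖ :=
            mul_le_mul_of_nonneg_right habs (norm_nonneg _)
        _ = ‖iteratedDeriv (m+2) A (t * (x - b) + b)‖ := one_mul _
        _ ≤ M := hM _ hc
    · exact intervalIntegrable_const
    · apply Filter.Eventually.of_forall
      intro t ht x hx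
      rw [Set.uIoc_of_le (by norm_num : (0:ℝ) ≤ 1)] at ht
      have ht' : t ∈ Set.Icc (0:ℝ) 1 := ⟨ht.1.le, ht.2⟩
      have hc : t * (x - b) + b ∈ Set.Ioo u v := hJs (hcJ hx ht')
      have hi : HasDerivAt (fun y : ℝ => t * (y - b) + b) t x := by
        simpa using (((hasDerivAt_id x).sub_const b).const_mul t).add_const b
      have hG := (hdiffD (m+1) hm _ hc).comp x hi
      have := hG.const_mul (t ^ m)
      exact this.congr_deriv (by ring)
  -- continuity of f m
  have hcont_f : ∀ (m : ℕ), m + 1 ≤ N → ContinuousOn (f m) (Set.Ioo u v) := by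
    intro m hm x₀ hx₀
    apply ContinuousAt.continuousWithinAt
    obtain ⟨ε, hε, hball, hJs, hJconv, hbJ⟩ := hnbhd x₀ hx₀
    set J := Set.Icc (min (x₀ - ε) p) (max (x₀ + ε) q) with hJ_def
    obtain ⟨M, hM⟩ := isCompact_Icc.exists_bound_of_continuousOn
      ((hcontD (m+1) hm).mono hJs)
    have hcJ : ∀ {x : ℝ}, x ∈ Metric.ball x₀ ε → ∀ {t : ℝ}, t ∈ Set.Icc (0:ℝ) 1 →
        t * (x - b) + b ∈ J := by
      intro x hx t ht
      have h := hJconv.add_smul_sub_mem hbJ (hball hx) ht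
      rw [smul_eq_mul] at h; rwa [add_comm] at h
    have hballs : Metric.ball x₀ ε ⊆ Set.Ioo u v := hball.trans hJs
    apply intervalIntegral.continuousAt_of_dominated_interval
      (bound := fun _ => M)
    · filter_upwards [Metric.ball_mem_nhds x₀ hε] with x hx
      rw [Set.uIoc_of_le (by norm_num : (0:ℝ) ≤ 1)]
      exact ((hIcont m hm x (hballs hx)).mono Set.Ioc_subset_Icc_self).aestronglyMeasurable
        measurableSet_Ioc
    · filter_upwards [Metric.ball_mem_nhds x₀ hε] with x hx
      apply Filter.Eventually.of_forall
      intro t ht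
      rw [Set.uIoc_of_le (by norm_num : (0:ℝ) ≤ 1)] at ht
      have ht' : t ∈ Set.Icc (0:ℝ) 1 := ⟨ht.1.le, ht.2⟩
      have hc : t * (x - b) + b ∈ J := hcJ hx ht'
      have habs : |t ^ m| ≤ 1 := by
        rw [abs_pow]
        exact pow_le_one₀ (abs_nonneg t) (abs_le.2 ⟨by linarith [ht.1], ht.2⟩)
      calc ‖t ^ m * iteratedDeriv (m+1) A (t * (x - b) + b)‖
          = |t ^ m| * ‖iteratedDeriv (m+1) A (t * (x - b) + b)‖ := by
            rw [Real.norm_eq_abs, Real.norm_eq_abs, abs_mul]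
        _ ≤ 1 * ‖iteratedDeriv (m+1) A (t * (x - b) + b)‖ :=
            mul_le_mul_of_nonneg_right habs (norm_nonneg _)
        _ = ‖iteratedDeriv (m+1) A (t * (x - b) + b)‖ := one_mul _
        _ ≤ M := hM _ hc
    · exact intervalIntegrable_const
    · apply Filter.Eventually.of_forall
      intro t ht
      rw [Set.uIoc_of_le (by norm_num : (0:ℝ) ≤ 1)] at ht
      have ht' : t ∈ Set.Icc (0:ℝ) 1 := ⟨ht.1.le, ht.2⟩
      have hc : t * (x₀ - b) + b ∈ Set.Ioo u v := hmem hx₀ ht'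
      have hGc : ContinuousAt (iteratedDeriv (m+1) A) (t * (x₀ - b) + b) :=
        (hcontD (m+1) hm).continuousAt (hs_open.mem_nhds hc)
      have hinner : ContinuousAt (fun x : ℝ => t * (x - b) + b) x₀ := by fun_prop
      have hcomp := ContinuousAt.comp (g := iteratedDeriv (m+1) A)
        (f := fun x : ℝ => t * (x - b) + b) (x := x₀) hGc hinner
      exact continuousAt_const.mul hcomp
  -- smoothness of f m
  have hCD : ∀ (j m : ℕ), m + 1 + j ≤ N → ContDiffOn ℝ (j : WithTop ℕ∞) (f m) (Set.Ioo u v) := by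
    intro j
    induction j with
    | zero =>
      intro m hm
      simpa [contDiffOn_zero] using hcont_f m (by omega)
    | succ j ih =>
      intro m hm
      have hcast : ((j + 1 : ℕ) : WithTop ℕ∞) = (j : WithTop ℕ∞) + 1 := by push_cast; ring
      rw [hcast, contDiffOn_succ_iff_deriv_of_isOpen hs_open]
      refine ⟨fun x hx =>
        (hderiv m (by omega) x hx).differentiableAt.differentiableWithinAt, by simp, ?_⟩
      exact (ih (m+1) (by omega)).congr fun x hx => (hderiv m (by omega) x hx).deriv
  -- identification of B with f 0
  have hB0 : ∀ x : ℝ, (∫ t in (0:ℝ)..1, deriv A (t * (x - b) + b)) = f 0 x := by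
    intro x
    simp [hf_def, iteratedDeriv_one]
  -- Part 2
  have part2 : ContDiffOn ℝ (↑(N - 1))
      (fun x => ∫ t in (0:ℝ)..1, deriv A (t * (x - b) + b)) (Set.Icc p q) := by
    have h := ((hCD (N - 1) 0 (by omega)).congr fun x _ => hB0 x).mono hKs
    exact_mod_cast h
  -- positivity of (-1)^m * f m
  have hpos : ∀ (m : ℕ), m + 1 ≤ N → ∀ x ∈ Set.Icc p q, 0 < (-1 : ℝ) ^ m * f m x := by
    intro m hm x hx
    have hxs : x ∈ Set.Ioo u v := hKs hx
    have heq : (-1 : ℝ) ^ m * f m x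
        = ∫ t in (0:ℝ)..1, (-1 : ℝ) ^ m * (t ^ m * iteratedDeriv (m+1) A (t * (x - b) + b)) := by
      rw [hf_def, intervalIntegral.integral_const_mul]
    rw [heq]
    apply intervalIntegral.intervalIntegral_pos_of_pos_on
    · exact (hIint m hm x hxs).const_mul _
    · intro t ht
      have hc : t * (x - b) + b ∈ Set.Icc p q := hmemK hx ⟨ht.1.le, ht.2.le⟩
      have h1 := hAd (m+1) (by omega) hm _ hc
      simp only [Nat.add_sub_cancel] at h1
      have ht' : 0 < t ^ m := pow_pos ht.1 m
      have : (-1 : ℝ) ^ m * (t ^ m * iteratedDeriv (m+1) A (t * (x - b) + b))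
          = t ^ m * ((-1 : ℝ) ^ m * iteratedDeriv (m+1) A (t * (x - b) + b)) := by ring
      rw [this]
      exact mul_pos ht' h1
    · norm_num
  -- identification of iterated derivatives
  have hUK : UniqueDiffOn ℝ (Set.Icc p q) := uniqueDiffOn_Icc hpq
  have hiter : ∀ (m : ℕ), m ≤ N - 1 → ∀ x ∈ Set.Icc p q,
      iteratedDerivWithin m (fun y => ∫ t in (0:ℝ)..1, deriv A (t * (y - b) + b))
        (Set.Icc p q) x = f m x := by
    intro m
    induction m with
    | zero =>
      intro _ x hx
      rw [iteratedDerivWithin_zero]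
      exact hB0 x
    | succ m ih =>
      intro hm x hx
      rw [iteratedDerivWithin_succ]
      rw [derivWithin_congr (fun y hy => ih (by omega) y hy) (ih (by omega) x hx)]
      exact ((hderiv m (by omega) x (hKs hx)).hasDerivWithinAt).derivWithin (hUK x hx)
  -- Part 3
  have part3 : ∀ m, m ≤ N - 1 → ∀ x ∈ Set.Icc p q,
      (-1 : ℝ) ^ (1 + m) *
        iteratedDerivWithin m (fun y => ∫ t in (0:ℝ)..1, deriv A (t * (y - b) + b))
          (Set.Icc p q) x < 0 := by
    intro m hm x hx
    rw [hiter m hm x hx]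
    have h := hpos m (by omega) x hx
    have hpow : (-1 : ℝ) ^ (1 + m) = -((-1 : ℝ) ^ m) := by
      rw [pow_add]; ring
    rw [hpow]
    linarith
  -- Part 1
  refine ⟨?_, part2, part3⟩
  intro x hx hxb
  have hxs : x ∈ Set.Ioo u v := hKs hx
  have hDA : DifferentiableOn ℝ A (Set.Ioo u v) := hA.differentiableOn (by exact_mod_cast (show N ≠ 0 by omega))
  have hcd : ∀ t ∈ Set.uIcc (0:ℝ) 1,
      HasDerivAt (fun s : ℝ => A (s * (x - b) + b)) ((x - b) * deriv A (t * (x - b) + b)) t := by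
    intro t ht
    rw [Set.uIcc_of_le (by norm_num : (0:ℝ) ≤ 1)] at ht
    have hc : t * (x - b) + b ∈ Set.Ioo u v := hmem hxs ht
    have hA1 : HasDerivAt A (deriv A (t * (x - b) + b)) (t * (x - b) + b) :=
      (((hDA _ hc).differentiableAt (hs_open.mem_nhds hc))).hasDerivAt
    have hi : HasDerivAt (fun s : ℝ => s * (x - b) + b) (x - b) t := by
      simpa using ((hasDerivAt_id t).mul_const (x - b)).add_const b
    have := hA1.comp t hi
    exact this.congr_deriv (by ring)
  have h0 : IntervalIntegrable (fun t : ℝ => deriv A (t * (x - b) + b)) volume 0 1 := by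
    have := hIint 0 hN x hxs
    simpa [iteratedDeriv_one] using this
  have hInt : IntervalIntegrable (fun t : ℝ => (x - b) * deriv A (t * (x - b) + b)) volume 0 1 :=
    h0.const_mul _
  have hFTC := intervalIntegral.integral_eq_sub_of_hasDerivAt hcd hInt
  rw [intervalIntegral.integral_const_mul] at hFTC
  simp only [one_mul, zero_mul, zero_add, sub_add_cancel] at hFTC
  rw [eq_div_iff (sub_ne_zero.2 hxb), mul_comm]
  exact hFTC
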